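/- Let N be a positive integer, κ₁ > 0 and κ₂ ∈ (−1/2, 1/2) with κ₂ ≠ 0, and let κ be the near-axis curvature model. Then 25 + 36κ₂ + 228κ₂² > 0, and a point ℓ ∈ (0, π/N) satisfies κ′(ℓ) = 0 if and only if cos²(Nℓ/2) = (−5 + 30κ₂ + √(25 + 36κ₂ + 228κ₂²)) / (56κ₂). In the case κ₂ = 0, a point ℓ ∈ (0, π/N) satisfies κ′(ℓ) = 0 if and only if cos²(Nℓ/2) = 3/5. -/

import Mathlib

open Real Set

lemma near_axis_key_deriv (N : ℕ) (κ₁ κ₂ : ℝ) (ℓ : ℝ) :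
    HasDerivAt (fun x => 2*κ₁*Real.sin ((N:ℝ)*x/2)^2*Real.cos ((N:ℝ)*x/2)^3*(1+2*κ₂*Real.cos ((N:ℝ)*x)))
      ((N:ℝ)*κ₁*Real.sin ((N:ℝ)*ℓ/2)*Real.cos ((N:ℝ)*ℓ/2)^2 *
        (28*κ₂*Real.cos ((N:ℝ)*ℓ/2)^4 + (5-30*κ₂)*Real.cos ((N:ℝ)*ℓ/2)^2 + (6*κ₂-3))) ℓ := by
  have h1 : HasDerivAt (fun x : ℝ => (N:ℝ)*x/2) ((N:ℝ)/2) ℓ := by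
    simpa using ((hasDerivAt_id ℓ).const_mul (N:ℝ)).div_const 2
  have h1' : HasDerivAt (fun x : ℝ => (N:ℝ)*x) (N:ℝ) ℓ := by
    simpa using (hasDerivAt_id ℓ).const_mul (N:ℝ)
  have hs : HasDerivAt (fun x : ℝ => Real.sin ((N:ℝ)*x/2))
      (Real.cos ((N:ℝ)*ℓ/2) * ((N:ℝ)/2)) ℓ := (Real.hasDerivAt_sin _).comp ℓ h1
  have hc : HasDerivAt (fun x : ℝ => Real.cos ((N:ℝ)*x/2))
      (-Real.sin ((N:ℝ)*ℓ/2) * ((N:ℝ)/2)) ℓ := (Real.hasDerivAt_cos _).comp ℓ h1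
  have hc2 : HasDerivAt (fun x : ℝ => Real.cos ((N:ℝ)*x))
      (-Real.sin ((N:ℝ)*ℓ) * (N:ℝ)) ℓ := (Real.hasDerivAt_cos _).comp ℓ h1'
  have H := (((hs.pow 2).const_mul (2*κ₁)).mul (hc.pow 3)).mul ((hc2.const_mul (2*κ₂)).const_add 1)
  convert H using 1
  · rfl
  · rfl
  · rfl
  simp only [Pi.pow_apply, Pi.mul_apply]
  have hq := Real.cos_two_mul ((N:ℝ)*ℓ/2)
  have hsin2 := Real.sin_two_mul ((N:ℝ)*ℓ/2)
  rw [show 2*((N:ℝ)*ℓ/2) = (N:ℝ)*ℓ by ring] at hq hsin2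
  have hsq : Real.sin ((N:ℝ)*ℓ/2)^2 = 1 - Real.cos ((N:ℝ)*ℓ/2)^2 := by
    have := Real.sin_sq_add_cos_sq ((N:ℝ)*ℓ/2); linarith
  rw [hq, hsin2]
  linear_combination (κ₁*(N:ℝ)*Real.sin ((N:ℝ)*ℓ/2)*Real.cos ((N:ℝ)*ℓ/2)^2*(3 - 6*κ₂ + 20*κ₂*Real.cos ((N:ℝ)*ℓ/2)^2)) * hsq

/-- For the near-axis curvature model, `25 + 36κ₂ + 228κ₂² > 0`; when
`κ₂ ≠ 0`, a point `ℓ ∈ (0, π/N)` is critical iff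
`cos²(Nℓ/2) = (−5 + 30κ₂ + √(25 + 36κ₂ + 228κ₂²))/(56κ₂)`; when `κ₂ = 0`, a point
`ℓ ∈ (0, π/N)` is critical iff `cos²(Nℓ/2) = 3/5`. -/
theorem near_axis_curvature_critical_point_characterization
    (N : ℕ) (hN : 0 < N) (κ₁ κ₂ : ℝ) (hκ₁ : 0 < κ₁)
    (hκ₂ : κ₂ ∈ Set.Ioo (-(1/2) : ℝ) (1/2))
    (κ : ℝ → ℝ)
    (hκ : ∀ ℓ : ℝ, κ ℓ =
      2 * κ₁ * Real.sin ((N : ℝ) * ℓ / 2) ^ 2 * Real.cos ((N : ℝ) * ℓ / 2) ^ 3 *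
        (1 + 2 * κ₂ * Real.cos ((N : ℝ) * ℓ))) :
    0 < 25 + 36 * κ₂ + 228 * κ₂ ^ 2 ∧
    (κ₂ ≠ 0 → ∀ ℓ ∈ Set.Ioo (0 : ℝ) (π / (N : ℝ)),
      (deriv κ ℓ = 0 ↔
        Real.cos ((N : ℝ) * ℓ / 2) ^ 2 =
          (-5 + 30 * κ₂ + Real.sqrt (25 + 36 * κ₂ + 228 * κ₂ ^ 2)) / (56 * κ₂))) ∧
    (κ₂ = 0 → ∀ ℓ ∈ Set.Ioo (0 : ℝ) (π / (N : ℝ)),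
      (deriv κ ℓ = 0 ↔ Real.cos ((N : ℝ) * ℓ / 2) ^ 2 = 3 / 5)) := by
  obtain ⟨hκ₂l, hκ₂r⟩ := hκ₂
  have hD : (0:ℝ) < 25 + 36 * κ₂ + 228 * κ₂ ^ 2 := by nlinarith [sq_nonneg (76*κ₂ + 6)]
  have hNpos : (0:ℝ) < (N:ℝ) := by exact_mod_cast hN
  have hκfun : κ = fun x => 2 * κ₁ * Real.sin ((N : ℝ) * x / 2) ^ 2 * Real.cos ((N : ℝ) * x / 2) ^ 3 *
        (1 + 2 * κ₂ * Real.cos ((N : ℝ) * x)) := funext hκ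
  have main : ∀ ℓ ∈ Set.Ioo (0 : ℝ) (π / (N : ℝ)),
      (deriv κ ℓ = 0 ↔
        28*κ₂*(Real.cos ((N:ℝ)*ℓ/2)^2)^2 + (5-30*κ₂)*(Real.cos ((N:ℝ)*ℓ/2)^2) + (6*κ₂-3) = 0) ∧
      0 < Real.cos ((N:ℝ)*ℓ/2)^2 ∧ Real.cos ((N:ℝ)*ℓ/2)^2 < 1 := by
    intro ℓ ⟨hl1, hl2⟩
    have hθ0 : 0 < (N:ℝ)*ℓ/2 := by positivity
    have hθ2 : (N:ℝ)*ℓ/2 < π/2 := by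
      have h' : (N:ℝ)*ℓ < π := by
        calc (N:ℝ)*ℓ < (N:ℝ)*(π/(N:ℝ)) := mul_lt_mul_of_pos_left hl2 hNpos
          _ = π := by field_simp
      linarith
    have hs0 : 0 < Real.sin ((N:ℝ)*ℓ/2) :=
      Real.sin_pos_of_pos_of_lt_pi hθ0 (by linarith [Real.pi_pos])
    have hc0 : 0 < Real.cos ((N:ℝ)*ℓ/2) :=
      Real.cos_pos_of_mem_Ioo ⟨by linarith, hθ2⟩
    have hd : deriv κ ℓ = ((N:ℝ)*κ₁*Real.sin ((N:ℝ)*ℓ/2)*Real.cos ((N:ℝ)*ℓ/2)^2) *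
        (28*κ₂*(Real.cos ((N:ℝ)*ℓ/2)^2)^2 + (5-30*κ₂)*(Real.cos ((N:ℝ)*ℓ/2)^2) + (6*κ₂-3)) := by
      rw [hκfun, (near_axis_key_deriv N κ₁ κ₂ ℓ).deriv]
      ring
    have hpos : 0 < (N:ℝ)*κ₁*Real.sin ((N:ℝ)*ℓ/2)*Real.cos ((N:ℝ)*ℓ/2)^2 :=
      mul_pos (mul_pos (mul_pos hNpos hκ₁) hs0) (pow_pos hc0 2)
    refine ⟨?_, pow_pos hc0 2, ?_⟩
    · rw [hd]
      exact mul_eq_zero.trans (or_iff_right hpos.ne')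
    · nlinarith [Real.sin_sq_add_cos_sq ((N:ℝ)*ℓ/2), hs0]
  refine ⟨hD, ?_, ?_⟩
  · -- κ₂ ≠ 0
    intro hk0 ℓ hmem
    obtain ⟨hiff, hu0, hu1⟩ := main ℓ hmem
    set u := Real.cos ((N:ℝ)*ℓ/2)^2 with hu
    set r := Real.sqrt (25 + 36 * κ₂ + 228 * κ₂ ^ 2) with hrdef
    have hr : r^2 = 25 + 36 * κ₂ + 228 * κ₂ ^ 2 := Real.sq_sqrt hD.le
    have hr0 : 0 ≤ r := Real.sqrt_nonneg _
    have hc56 : (56*κ₂ : ℝ) ≠ 0 := by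
      intro h; apply hk0; linarith [h]
    rw [hiff, eq_div_iff hc56]
    constructor
    · intro h
      have ht2 : (56*κ₂*u + 5 - 30*κ₂ - r) * (56*κ₂*u + 5 - 30*κ₂ + r) = 0 := by
        linear_combination 112*κ₂*h - hr
      rcases mul_eq_zero.mp ht2 with ht | ht
      · linarith
      · exfalso
        rcases lt_or_gt_of_ne hk0 with hneg | hpos
        · -- κ₂ < 0 : contradiction with u < 1
          have h5 : (0:ℝ) < 28*κ₂*u + 5 - 2*κ₂ := by
            rcases le_or_gt (28*κ₂*u + 5 - 2*κ₂) 0 with hle | hlt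
            · exfalso
              nlinarith [mul_nonneg (by linarith : (0:ℝ) ≤ 1-u)
                (by linarith : (0:ℝ) ≤ -(28*κ₂*u + 5 - 2*κ₂)), h]
            · exact hlt
          nlinarith [h5, ht, hr0, mul_pos (by linarith : (0:ℝ) < -κ₂) (by linarith : (0:ℝ) < 1-u)]
        · -- κ₂ > 0 : contradiction with u > 0
          have hku : 0 < κ₂ * u := mul_pos hpos hu0
          have h1 : 30*κ₂ - 5 - r = 56*κ₂*u := by linarith
          have h2 : (0:ℝ) < 30*κ₂ - 5 - r := by linarith [mul_pos hpos hu0]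
          have h3 : (0:ℝ) < 30*κ₂ - 5 + r := by linarith
          nlinarith [mul_pos h2 h3, hr, mul_pos hpos (by linarith : (0:ℝ) < 1 - 2*κ₂)]
    · intro h
      have h0 : 112*κ₂*(28*κ₂*u^2 + (5-30*κ₂)*u + (6*κ₂-3)) = 0 := by
        linear_combination (56*κ₂*u + 5 - 30*κ₂ + r) * h + hr
      rcases mul_eq_zero.mp h0 with h1 | h1
      · exact absurd (by linarith : κ₂ = 0) hk0
      · linear_combination h1
  · -- κ₂ = 0
    intro hk0 ℓ hmem
    subst hk0
    obtain ⟨hiff, hu0, hu1⟩ := main ℓ hmem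
    rw [hiff]
    constructor <;> intro h <;> linarith [h]
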